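/- Descent-type bound for projected steps: Let f be convex differentiable with L-Lipschitz gradient, W ⊆ ℝ^d closed convex, 0 < η ≤ 1/L, v ∈ ℝ^d, w⁻ ∈ W, w⁺ = Π_W(w⁻ − ηv), g = (w⁻ − w⁺)/η, δ = ∇f(w⁻) − v. Then for any w* ∈ W: ⟨w* − w⁻, g⟩ + (η/2)‖g‖² ≤ f(w*) − f(w⁺) − ⟨w* − w⁺, δ⟩. -/

import Mathlib

open RealInnerProductSpace InnerProductSpace

section Aux
variable {E : Type*} [NormedAddCommGroup E] [InnerProductSpace ℝ E] [CompleteSpace E]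

lemma aux_line16 (f : E → ℝ) (hdiff : Differentiable ℝ f) (x u : E) (t : ℝ) :
    HasDerivAt (fun t : ℝ => f (x + t • u)) ⟪gradient f (x + t • u), u⟫ t := by
  have hc : HasDerivAt (fun t : ℝ => x + t • u) u t := by
    simpa using ((hasDerivAt_id t).smul_const u).const_add x
  have hf := (hdiff (x + t • u)).hasFDerivAt
  have h2 := hf.comp_hasDerivAt t hc
  have : ⟪gradient f (x + t • u), u⟫ = fderiv ℝ f (x + t • u) u := by
    rw [gradient, toDual_symm_apply]
  rw [this]
  exact h2

lemma aux_convex16 (f : E → ℝ) (hconv : ConvexOn ℝ Set.univ f)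
    (hdiff : Differentiable ℝ f) (x y : E) :
    f x + ⟪gradient f x, y - x⟫ ≤ f y := by
  set u := y - x with hu
  have hder : HasDerivAt (fun t : ℝ => f (x + t • u)) ⟪gradient f x, u⟫ 0 := by
    have := aux_line16 f hdiff x u 0
    simpa using this
  have hslope := hasDerivAt_iff_tendsto_slope.mp hder
  have hslope' : Filter.Tendsto (slope (fun t : ℝ => f (x + t • u)) 0)
      (nhdsWithin 0 (Set.Ioi 0)) (nhds ⟪gradient f x, u⟫) :=
    hslope.mono_left (nhdsWithin_mono 0 (fun t ht => ne_of_gt ht))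
  have hle : ⟪gradient f x, u⟫ ≤ f y - f x := by
    refine le_of_tendsto hslope' ?_
    filter_upwards [Ioc_mem_nhdsGT_of_mem (Set.mem_Ico.mpr ⟨le_refl (0:ℝ), one_pos⟩)]
      with t ht
    obtain ⟨ht0, ht1⟩ := ht
    have hcvx := hconv.2 (Set.mem_univ x) (Set.mem_univ y)
      (by linarith : (0:ℝ) ≤ 1 - t) (le_of_lt ht0) (by ring)
    have heq : (1 - t) • x + t • y = x + t • u := by
      rw [hu]; module
    rw [heq] at hcvx
    rw [slope_def_field]
    simp only [zero_smul, add_zero, sub_zero, smul_eq_mul] at hcvx ⊢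
    rw [div_le_iff₀ ht0]
    nlinarith [hcvx]
  linarith [hle]

lemma aux_descent16 (f : E → ℝ) (hdiff : Differentiable ℝ f) (L : ℝ) (hL : 0 < L)
    (hlip : ∀ x y, ‖gradient f x - gradient f y‖ ≤ L * ‖x - y‖) (x y : E) :
    f y ≤ f x + ⟪gradient f x, y - x⟫ + L / 2 * ‖y - x‖ ^ 2 := by
  set u := y - x with hu
  set φ : ℝ → ℝ := fun t => f (x + t • u) - t * ⟪gradient f x, u⟫ - L / 2 * ‖u‖ ^ 2 * t ^ 2
    with hφdef
  have hφ : ∀ t, HasDerivAt φ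
      (⟪gradient f (x + t • u), u⟫ - ⟪gradient f x, u⟫ - L / 2 * ‖u‖ ^ 2 * (2 * t)) t := by
    intro t
    have h1 := aux_line16 f hdiff x u t
    have h2 : HasDerivAt (fun t : ℝ => t * ⟪gradient f x, u⟫) ⟪gradient f x, u⟫ t := by
      simpa using (hasDerivAt_id t).mul_const ⟪gradient f x, u⟫
    have h3 : HasDerivAt (fun t : ℝ => L / 2 * ‖u‖ ^ 2 * t ^ 2)
        (L / 2 * ‖u‖ ^ 2 * (2 * t)) t := by
      have := (hasDerivAt_pow 2 t).const_mul (L / 2 * ‖u‖ ^ 2)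
      exact this.congr_deriv (by norm_num)
    exact (h1.sub h2).sub h3
  have hanti : AntitoneOn φ (Set.Icc 0 1) := by
    apply antitoneOn_of_deriv_nonpos (convex_Icc (0:ℝ) 1)
    · exact fun t _ => (hφ t).continuousAt.continuousWithinAt
    · exact fun t _ => (hφ t).differentiableAt.differentiableWithinAt
    · intro t ht
      rw [interior_Icc] at ht
      rw [(hφ t).deriv]
      have hbound : ⟪gradient f (x + t • u), u⟫ - ⟪gradient f x, u⟫ ≤ L * t * ‖u‖ ^ 2 := by
        have h1 : ⟪gradient f (x + t • u) - gradient f x, u⟫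
            ≤ ‖gradient f (x + t • u) - gradient f x‖ * ‖u‖ := real_inner_le_norm _ _
        have h2 : ‖gradient f (x + t • u) - gradient f x‖ ≤ L * (t * ‖u‖) := by
          have := hlip (x + t • u) x
          simpa [norm_smul, abs_of_pos ht.1] using this
        have h3 : ‖gradient f (x + t • u) - gradient f x‖ * ‖u‖ ≤ L * (t * ‖u‖) * ‖u‖ :=
          mul_le_mul_of_nonneg_right h2 (norm_nonneg u)
        rw [inner_sub_left] at h1
        nlinarith [h1, h3]
      nlinarith [hbound, ht.1]
  have hkey := hanti (Set.mem_Icc.mpr ⟨le_refl (0:ℝ), zero_le_one⟩)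
    (Set.mem_Icc.mpr ⟨zero_le_one, le_refl (1:ℝ)⟩) zero_le_one
  have hφ0 : φ 0 = f x := by simp [hφdef]
  have hφ1 : φ 1 = f y - ⟪gradient f x, u⟫ - L / 2 * ‖u‖ ^ 2 := by
    simp [hφdef, hu]
  rw [hφ0, hφ1] at hkey
  linarith

end Aux

open RealInnerProductSpace

/-- Descent-type bound for projected steps: for convex differentiable `f` with
`L`-Lipschitz gradient, closed convex `W`, `0 < η ≤ 1/L`, `w⁺ = Π_W(w⁻ − ηv)`,
`g = (w⁻ − w⁺)/η`, `δ = ∇f(w⁻) − v`, and any `w* ∈ W`: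
`⟨w* − w⁻, g⟩ + (η/2)‖g‖² ≤ f(w*) − f(w⁺) − ⟨w* − w⁺, δ⟩`. -/
theorem stmt_16 (d : ℕ) (f : EuclideanSpace ℝ (Fin d) → ℝ) (L : ℝ) (hL : 0 < L)
    (hconv : ConvexOn ℝ Set.univ f) (hdiff : Differentiable ℝ f)
    (hlip : ∀ x y, ‖gradient f x - gradient f y‖ ≤ L * ‖x - y‖)
    (W : Set (EuclideanSpace ℝ (Fin d))) (hWconv : Convex ℝ W) (hWclosed : IsClosed W)
    (η : ℝ) (hη0 : 0 < η) (hη1 : η ≤ 1 / L)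
    (v wm wp : EuclideanSpace ℝ (Fin d)) (hwm : wm ∈ W) (hwp : wp ∈ W)
    (hprojchar : ∀ u ∈ W, ⟪wp - (wm - η • v), u - wp⟫ ≥ 0) :
    ∀ wstar ∈ W,
      ⟪wstar - wm, (η⁻¹ : ℝ) • (wm - wp)⟫ + η / 2 * ‖(η⁻¹ : ℝ) • (wm - wp)‖ ^ 2
        ≤ f wstar - f wp - ⟪wstar - wp, gradient f wm - v⟫ := by
  intro wstar hwstar
  set g := wm - wp with hg
  set T := ⟪wstar - wm, g⟫ with hT
  set G := ‖g‖ ^ 2 with hG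
  set Dsp := ⟪gradient f wm, wstar - wp⟫ with hDsp
  set Vsp := ⟪v, wstar - wp⟫ with hVsp
  -- rewrite goal
  have hgoal1 : ⟪wstar - wm, (η⁻¹ : ℝ) • g⟫ = η⁻¹ * T := real_inner_smul_right _ _ _
  have hgoal2 : ‖(η⁻¹ : ℝ) • g‖ ^ 2 = (η⁻¹) ^ 2 * G := by
    rw [norm_smul, mul_pow, hG]
    congr 1
    rw [Real.norm_eq_abs, abs_of_pos (inv_pos.mpr hη0)]
  have hgoal3 : ⟪wstar - wp, gradient f wm - v⟫ = Dsp - Vsp := by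
    rw [inner_sub_right, real_inner_comm (gradient f wm) (wstar - wp),
      real_inner_comm v (wstar - wp), ← hDsp, ← hVsp]
  rw [hgoal1, hgoal2, hgoal3]
  -- h1 : f wstar - f wp ≥ Dsp - L/2 * G
  have hA := aux_convex16 f hconv hdiff wm wstar
  have hB := aux_descent16 f hdiff L hL hlip wm wp
  have hDid : Dsp = ⟪gradient f wm, wstar - wm⟫ - ⟪gradient f wm, wp - wm⟫ := by
    rw [hDsp, ← inner_sub_right]
    congr 1
    abel
  have hGnorm : ‖wp - wm‖ ^ 2 = G := by rw [hG, hg, ← norm_neg]; congr 1; abel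
  have h1 : Dsp - L / 2 * G ≤ f wstar - f wp := by
    rw [hDid]
    rw [hGnorm] at hB
    linarith
  -- h2 : T + G ≤ η * Vsp
  have hP := hprojchar wstar hwstar
  have hv1 : wp - (wm - η • v) = η • v - g := by rw [hg]; abel
  have hv2 : wstar - wp = (wstar - wm) + g := by rw [hg]; abel
  have hgip : ⟪g, wstar - wp⟫ = T + G := by
    rw [hv2, inner_add_right, real_inner_comm (wstar - wm) g, ← hT,
      real_inner_self_eq_norm_sq, ← hG]
  have hPeq : ⟪wp - (wm - η • v), wstar - wp⟫ = η * Vsp - (T + G) := by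
    rw [hv1, inner_sub_left, real_inner_smul_left, hgip, ← hVsp]
  rw [hPeq] at hP
  have h2 : T + G ≤ η * Vsp := by linarith
  have h2' : η⁻¹ * (T + G) ≤ Vsp := by
    have h := mul_le_mul_of_nonneg_left h2 (inv_nonneg.mpr hη0.le)
    rwa [← mul_assoc, inv_mul_cancel₀ (ne_of_gt hη0), one_mul] at h
  have hGnn : (0:ℝ) ≤ G := by rw [hG]; positivity
  have hLη : L * η ≤ 1 := by
    have h := (le_div_iff₀ hL).mp hη1
    linarith [h]
  have hLinv : L ≤ η⁻¹ := by
    rw [← one_div]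
    exact (le_div_iff₀ hη0).mpr hLη
  have hsimp : η / 2 * (η⁻¹ ^ 2 * G) = η⁻¹ / 2 * G := by
    field_simp
  rw [hsimp]
  nlinarith [mul_nonneg (sub_nonneg.mpr hLinv) hGnn, h1, h2', hGnn]
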